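/- Let b ∈ ℂ and ε > 0, and let W ⊆ ℂ be a bounded domain with closure contained in B(b, ε). Let h be holomorphic on an open set containing the closure of W, suppose |h(z) − b| = ε for every z on the boundary of W, and suppose h takes the value b at some point of W. Then h has a fixed point in W, i.e., there exists ξ ∈ W with h(ξ) = ξ. -/

import Mathlib

open Set Metric Bornology

/-- Clopen-argument surjectivity lemma: if `φ` is holomorphic on a neighborhood of the
closure of a bounded connected open set `U`, and `y` lies in a connected set `C` avoiding
`φ '' frontier U` that also contains a value `φ z₀` with `z₀ ∈ U`, then `y ∈ φ '' U`. -/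
lemma key_surj (U : Set ℂ) (hUo : IsOpen U) (hUc : IsConnected U) (hUb : IsBounded U)
    (Ω : Set ℂ) (hΩ : IsOpen Ω) (hUΩ : closure U ⊆ Ω)
    (φ : ℂ → ℂ) (hφ : DifferentiableOn ℂ φ Ω)
    (z₀ : ℂ) (hz₀ : z₀ ∈ U) (y : ℂ)
    (C : Set ℂ) (hC : IsPreconnected C) (hCd : ∀ c ∈ C, c ∉ φ '' frontier U)
    (hφz₀ : φ z₀ ∈ C) (hy : y ∈ C) :
    ∃ z ∈ U, φ z = y := by
  have hclU : IsCompact (closure U) := hUb.isCompact_closure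
  have hcont : ContinuousOn φ (closure U) := hφ.continuousOn.mono hUΩ
  have hfr : frontier U ⊆ closure U := frontier_subset_closure
  have hKf : IsCompact (frontier U) := hclU.of_isClosed_subset isClosed_frontier hfr
  have hFc : IsCompact (φ '' frontier U) := hKf.image_of_continuousOn (hcont.mono hfr)
  have hGo : IsOpen (φ '' frontier U)ᶜ := hFc.isClosed.isOpen_compl
  have hφz₀G : φ z₀ ∈ (φ '' frontier U)ᶜ := hCd _ hφz₀
  set V := connectedComponentIn (φ '' frontier U)ᶜ (φ z₀) with hV
  have hVo : IsOpen V := hGo.connectedComponentIn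
  have hCV : C ⊆ V := hC.subset_connectedComponentIn hφz₀ (fun c hc => hCd c hc)
  have hVG : V ⊆ (φ '' frontier U)ᶜ := connectedComponentIn_subset _ _
  have hVconn : IsPreconnected V := isPreconnected_connectedComponentIn
  -- frontier U is nonempty
  have hUne_univ : U ≠ univ := by
    intro hU
    exact NormedSpace.unbounded_univ ℝ ℂ (hU ▸ hUb)
  obtain ⟨x₁, hx₁⟩ : (frontier U).Nonempty :=
    nonempty_frontier_iff.mpr ⟨hUc.nonempty, hUne_univ⟩
  -- φ is not constant on U, hence an open map on U
  have hφa : AnalyticOnNhd ℂ φ Ω := hφ.analyticOnNhd hΩ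
  have hopen : ∀ s ⊆ U, IsOpen s → IsOpen (φ '' s) := by
    rcases (hφa.mono (subset_closure.trans hUΩ)).is_constant_or_isOpen
        hUc.isPreconnected with ⟨c, hc⟩ | hopen
    · exfalso
      have hφx₁ : φ x₁ = c := by
        have h1 : φ x₁ ∈ closure (φ '' U) :=
          (hcont x₁ (hfr hx₁)).mono subset_closure |>.mem_closure_image (hfr hx₁)
        have h2 : φ '' U ⊆ {c} := by
          rintro _ ⟨z, hz, rfl⟩; exact hc z hz
        have := (closure_minimal h2 isClosed_singleton) h1
        simpa using this
      exact hφz₀G ⟨x₁, hx₁, by rw [hφx₁, hc z₀ hz₀]⟩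
    · exact hopen
  have hAopen : IsOpen (φ '' U) := hopen U subset_rfl hUo
  -- V ∩ φ '' closure U ⊆ φ '' U
  have hkey : V ∩ (φ '' closure U) ⊆ φ '' U := by
    rintro v ⟨hvV, z, hz, rfl⟩
    by_cases hzU : z ∈ U
    · exact ⟨z, hzU, rfl⟩
    · exfalso
      have : z ∈ frontier U := by
        rw [frontier, hUo.interior_eq]; exact ⟨hz, hzU⟩
      exact hVG hvV ⟨z, this, rfl⟩
  have hclim : IsClosed (φ '' closure U) := (hclU.image_of_continuousOn hcont).isClosed
  -- V ⊆ φ '' U by preconnectedness of V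
  have hVA : V ⊆ φ '' U := by
    have hsub : V ⊆ (φ '' U) ∪ (φ '' closure U)ᶜ := by
      intro v hv
      by_cases hvim : v ∈ φ '' closure U
      · exact Or.inl (hkey ⟨hv, hvim⟩)
      · exact Or.inr hvim
    have hne1 : (V ∩ (φ '' U)).Nonempty :=
      ⟨φ z₀, mem_connectedComponentIn hφz₀G, ⟨z₀, hz₀, rfl⟩⟩
    by_contra hvnA
    have hne2 : (V ∩ (φ '' closure U)ᶜ).Nonempty := by
      rcases not_subset.mp hvnA with ⟨v, hvV, hvA⟩
      refine ⟨v, hvV, fun hvim => hvA (hkey ⟨hvV, hvim⟩)⟩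
    obtain ⟨v, hvV, hv1, hv2⟩ := hVconn _ _ hAopen hclim.isOpen_compl hsub hne1 hne2
    exact hv2 (image_mono (f := φ) subset_closure hv1)
  obtain ⟨z, hz, hzy⟩ := hVA (hCV hy)
  exact ⟨z, hz, hzy⟩

/-- **Rouché-type fixed point lemma.** Let `W` be a bounded domain with closure
contained in `B(b, ε)`, and let `h` be holomorphic on an open set containing
the closure of `W`, with `|h(z) - b| = ε` on the boundary of `W`. If `h` takes
the value `b` somewhere in `W`, then `h` has a fixed point in `W`. -/
theorem rouche_type_fixed_point
    (b : ℂ) (ε : ℝ) (hε : 0 < ε)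
    (W : Set ℂ) (hWopen : IsOpen W) (hWconn : IsConnected W)
    (hWbdd : Bornology.IsBounded W)
    (hWcl : closure W ⊆ Metric.ball b ε)
    (Ω : Set ℂ) (hΩ : IsOpen Ω) (hWΩ : closure W ⊆ Ω)
    (h : ℂ → ℂ) (hhol : DifferentiableOn ℂ h Ω)
    (hbd : ∀ z ∈ frontier W, ‖h z - b‖ = ε)
    (hval : ∃ w ∈ W, h w = b) :
    ∃ ξ ∈ W, h ξ = ξ := by
  obtain ⟨w, hwW, hwb⟩ := hval
  have hclW : IsCompact (closure W) := hWbdd.isCompact_closure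
  have hfrsub : frontier W ⊆ closure W := frontier_subset_closure
  have hKfr : IsCompact (frontier W) := hclW.of_isClosed_subset isClosed_frontier hfrsub
  have hWne_univ : W ≠ univ := by
    intro hW
    exact NormedSpace.unbounded_univ ℝ ℂ (hW ▸ hWbdd)
  have hfrne : (frontier W).Nonempty := nonempty_frontier_iff.mpr ⟨hWconn.nonempty, hWne_univ⟩
  -- distance bound on the frontier
  obtain ⟨zm, hzm, hmax⟩ := hKfr.exists_isMaxOn hfrne
    ((continuous_id.sub continuous_const).norm.continuousOn)
  set r : ℝ := ‖zm - b‖ with hrdef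
  have hrε : r < ε := by
    have := hWcl (hfrsub hzm)
    rwa [mem_ball, Complex.dist_eq] at this
  set δ : ℝ := ε - r with hδdef
  have hδpos : 0 < δ := by simp [hδdef]; linarith
  have habs_le_r : ∀ z ∈ frontier W, ‖z - b‖ ≤ r := fun z hz => hmax hz
  -- lower bound for |h z - b - t (z - b)| on the frontier
  have hlow : ∀ t : ℝ, t ∈ Icc (0:ℝ) 1 → ∀ z ∈ frontier W,
      δ ≤ ‖h z - b - (t : ℂ) * (z - b)‖ := by
    intro t ht z hz
    have h1 : ‖(t : ℂ) * (z - b)‖ ≤ r := by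
      rw [norm_mul]
      calc ‖(t : ℂ)‖ * ‖z - b‖
          ≤ 1 * ‖z - b‖ := by
            apply mul_le_mul_of_nonneg_right _ (norm_nonneg _)
            rw [Complex.norm_real, Real.norm_eq_abs]
            rw [abs_of_nonneg ht.1]; exact ht.2
        _ ≤ r := by rw [one_mul]; exact habs_le_r z hz
    have h2 := norm_sub_norm_le (h z - b) ((t : ℂ) * (z - b))
    rw [hbd z hz] at h2
    linarith
  -- the compact set of parameters for which a zero exists
  set g : ℝ × ℂ → ℂ := fun p => h p.2 - b - (p.1 : ℂ) * (p.2 - b) with hgdef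
  set K : Set (ℝ × ℂ) := Icc (0:ℝ) 1 ×ˢ closure W with hKdef
  have hKcomp : IsCompact K := isCompact_Icc.prod hclW
  have hKclosed : IsClosed K := isClosed_Icc.prod isClosed_closure
  have hgcK : ContinuousOn g K := by
    have hh2 : ContinuousOn (fun p : ℝ × ℂ => h p.2) K := by
      apply hhol.continuousOn.comp continuous_snd.continuousOn
      intro p hp
      exact hWΩ hp.2
    exact (hh2.sub continuousOn_const).sub
      (((Complex.continuous_ofReal.comp continuous_fst).mul
        (continuous_snd.sub continuous_const)).continuousOn)
  set S : Set (ℝ × ℂ) := K ∩ g ⁻¹' {0} with hSdef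
  have hSclosed : IsClosed S := hgcK.preimage_isClosed_of_isClosed hKclosed isClosed_singleton
  have hScomp : IsCompact S := hKcomp.of_isClosed_subset hSclosed inter_subset_left
  set T : Set ℝ := Prod.fst '' S with hTdef
  have hTcomp : IsCompact T := hScomp.image continuous_fst
  have h0T : (0:ℝ) ∈ T := by
    refine ⟨(0, w), ⟨⟨⟨le_rfl, zero_le_one⟩, subset_closure hwW⟩, ?_⟩, rfl⟩
    simp [hgdef, hwb]
  set s : ℝ := sSup T with hsdef
  have hsT : s ∈ T := hTcomp.sSup_mem ⟨0, h0T⟩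
  obtain ⟨⟨t, z⟩, ⟨⟨htI, hzcl⟩, hgz0⟩, hts⟩ := hsT
  simp only at hts
  have hgz : h z - b = (t : ℂ) * (z - b) := by
    have : g (t, z) = 0 := hgz0
    simp only [hgdef] at this
    linear_combination this
  -- the zero lies in W
  have hzball : ‖z - b‖ < ε := by
    have := hWcl hzcl
    rwa [mem_ball, Complex.dist_eq] at this
  have hzW : z ∈ W := by
    by_contra hzWn
    have hzfr : z ∈ frontier W := by
      rw [frontier, hWopen.interior_eq]; exact ⟨hzcl, hzWn⟩
    have h1 : ‖h z - b‖ = ε := hbd z hzfr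
    have h2 : ‖h z - b‖ ≤ ‖z - b‖ := by
      rw [hgz, norm_mul, Complex.norm_real, Real.norm_eq_abs, abs_of_nonneg htI.1]
      exact mul_le_of_le_one_left (norm_nonneg _) htI.2
    linarith
  -- if t = 1 we are done; otherwise contradict maximality of s = sSup T
  rcases eq_or_lt_of_le htI.2 with ht1 | ht1
  · refine ⟨z, hzW, ?_⟩
    have ht1' : t = 1 := ht1
    rw [ht1'] at hgz
    push_cast at hgz
    linear_combination hgz
  · exfalso
    set ρ : ℝ := ‖z - b‖ with hρdef
    have hρnn : 0 ≤ ρ := norm_nonneg _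
    set η : ℝ := δ / (ρ + 1) with hηdef
    have hηpos : 0 < η := div_pos hδpos (by linarith)
    set t' : ℝ := min 1 (t + η) with ht'def
    have ht'le1 : t' ≤ 1 := min_le_left _ _
    have ht'gt : t < t' := lt_min ht1 (by linarith)
    have ht'nn : 0 ≤ t' := le_min zero_le_one (by linarith [htI.1])
    have hdiff : t' - t ≤ η := by
      have := min_le_right 1 (t + η)
      simp only [ht'def]
      rcases min_cases 1 (t + η) with ⟨hm, _⟩ | ⟨hm, _⟩ <;> rw [hm] <;> linarith
    -- the value of φ at z is small
    set φ : ℂ → ℂ := fun x => h x - b - (t' : ℂ) * (x - b) with hφdef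
    have hφz : φ z = ((t : ℂ) - (t' : ℂ)) * (z - b) := by
      simp only [hφdef]
      rw [hgz]; ring
    have hφzabs : ‖φ z‖ < δ := by
      rw [hφz, norm_mul]
      have h1 : ‖(t : ℂ) - (t' : ℂ)‖ = t' - t := by
        rw [← Complex.ofReal_sub, Complex.norm_real, Real.norm_eq_abs, abs_of_nonpos (by linarith)]
        ring
      rw [h1]
      calc (t' - t) * ρ ≤ η * ρ := by
            apply mul_le_mul_of_nonneg_right hdiff hρnn
        _ < δ := by
            rw [hηdef, div_mul_eq_mul_div, div_lt_iff₀ (by linarith : (0:ℝ) < ρ + 1)]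
            nlinarith [hδpos]
    have hφdiff : DifferentiableOn ℂ φ Ω := by
      apply (hhol.sub (differentiableOn_const b)).sub
      exact ((differentiable_const ((t' : ℂ))).mul
        (differentiable_id.sub (differentiable_const b))).differentiableOn
    -- apply the key surjectivity lemma with the segment from φ z to 0
    have hseg : ∀ c ∈ segment ℝ (0 : ℂ) (φ z), c ∉ φ '' frontier W := by
      intro c hc hmem
      obtain ⟨x, hxfr, hφxc⟩ := hmem
      obtain ⟨a, a', ha, ha', haa, hce⟩ := hc
      have hcabs : ‖c‖ ≤ ‖φ z‖ := by
        rw [← hce, smul_zero, zero_add, show a' • φ z = (a' : ℂ) * φ z from rfl, norm_mul,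
          Complex.norm_real, Real.norm_eq_abs, abs_of_nonneg ha']
        exact mul_le_of_le_one_left (norm_nonneg _) (by linarith)
      have hlb : δ ≤ ‖φ x‖ := hlow t' ⟨ht'nn, ht'le1⟩ x hxfr
      rw [hφxc] at hlb
      linarith
    obtain ⟨x, hxW, hφx⟩ := key_surj W hWopen hWconn hWbdd Ω hΩ hWΩ φ hφdiff z hzW 0
      (segment ℝ (0:ℂ) (φ z)) (convex_segment _ _).isPreconnected hseg
      (right_mem_segment _ _ _) (left_mem_segment _ _ _)
    -- t' ∈ T, contradicting s = sSup T
    have ht'T : t' ∈ T := by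
      refine ⟨(t', x), ⟨⟨⟨ht'nn, ht'le1⟩, subset_closure hxW⟩, ?_⟩, rfl⟩
      simpa [hgdef, hφdef] using hφx
    have : t' ≤ s := le_csSup hTcomp.bddAbove ht'T
    rw [← hts] at this
    linarith
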